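/- Let G be a graph and X, Y disjoint vertex subsets such that G[X ∪ Y] is a forest. Then the number of vertices in X that have at least two neighbors in Y is at most 2w, where w is the size of a maximum induced matching in the bipartite graph G[X, Y] (the graph on X ∪ Y with exactly the edges of G between X and Y). -/

import Mathlib

open SimpleGraph

variable {V : Type*} [Fintype V] [DecidableEq V]

/-- The bipartite graph `G[X, Y]` on the whole vertex set: exactly the edges of `G`
with one endpoint in `X` and the other in `Y`. -/
def bipGraph (G : SimpleGraph V) (X Y : Set V) : SimpleGraph V where
  Adj u v := G.Adj u v ∧ ((u ∈ X ∧ v ∈ Y) ∨ (u ∈ Y ∧ v ∈ X))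
  symm := by
    constructor
    intro u v h
    exact ⟨h.1.symm, h.2.elim (fun hx => Or.inr ⟨hx.2, hx.1⟩) (fun hx => Or.inl ⟨hx.2, hx.1⟩)⟩
  loopless := by constructor; intro v h; exact G.irrefl h.1

/-- An induced matching in `H`: a matching such that the subgraph induced by its
endpoints has no further edges. -/
def IsInducedMatching (H : SimpleGraph V) (M : H.Subgraph) : Prop :=
  M.IsMatching ∧ ∀ u v, u ∈ M.verts → v ∈ M.verts → H.Adj u v → M.Adj u v

section Aux

variable {W : Type*}

/-- restriction of a graph to a vertex set, as a graph on the same vertex type -/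
def resG (B : SimpleGraph W) (A : Set W) : SimpleGraph W where
  Adj u v := B.Adj u v ∧ u ∈ A ∧ v ∈ A
  symm := ⟨fun u v h => ⟨h.1.symm, h.2.2, h.2.1⟩⟩
  loopless := ⟨fun v h => B.irrefl h.1⟩

lemma acyclic_mono {B C : SimpleGraph W} (hle : B ≤ C) (hC : C.IsAcyclic) : B.IsAcyclic := by
  intro v c hc
  exact hC (c.mapLe hle) (hc.mapLe _)

/-- Lift a walk of a graph `B` whose edges live inside `s` to the induced graph on `s`. -/
def liftW (Gr B : SimpleGraph W) (s : Set W)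
    (hsub : ∀ u v, B.Adj u v → Gr.Adj u v ∧ u ∈ s ∧ v ∈ s) :
    ∀ {a b : W} (_ : B.Walk a b) (ha : a ∈ s) (hb : b ∈ s),
      (Gr.induce s).Walk ⟨a, ha⟩ ⟨b, hb⟩
  | _, _, SimpleGraph.Walk.nil, _, _ => SimpleGraph.Walk.nil
  | _, _, SimpleGraph.Walk.cons h w, ha, hb =>
      SimpleGraph.Walk.cons (by exact (hsub _ _ h).1) (liftW Gr B s hsub w (hsub _ _ h).2.2 hb)

lemma liftW_support (Gr B : SimpleGraph W) (s : Set W) (hsub) :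
    ∀ {a b : W} (w : B.Walk a b) (ha : a ∈ s) (hb : b ∈ s),
      (liftW Gr B s hsub w ha hb).support.map Subtype.val = w.support
  | _, _, SimpleGraph.Walk.nil, _, _ => rfl
  | _, _, SimpleGraph.Walk.cons h w, ha, hb => by
      simp only [liftW, SimpleGraph.Walk.support_cons, List.map_cons]
      exact congrArg (List.cons _) (liftW_support Gr B s hsub w _ hb)

lemma liftW_edges (Gr B : SimpleGraph W) (s : Set W) (hsub) :
    ∀ {a b : W} (w : B.Walk a b) (ha : a ∈ s) (hb : b ∈ s),
      (liftW Gr B s hsub w ha hb).edges.map (Sym2.map Subtype.val) = w.edges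
  | _, _, SimpleGraph.Walk.nil, _, _ => rfl
  | _, _, SimpleGraph.Walk.cons h w, ha, hb => by
      simp only [liftW, SimpleGraph.Walk.edges_cons, List.map_cons]
      exact congrArg (List.cons _) (liftW_edges Gr B s hsub w _ hb)

lemma liftW_length (Gr B : SimpleGraph W) (s : Set W) (hsub) :
    ∀ {a b : W} (w : B.Walk a b) (ha : a ∈ s) (hb : b ∈ s),
      (liftW Gr B s hsub w ha hb).length = w.length
  | _, _, SimpleGraph.Walk.nil, _, _ => rfl
  | _, _, SimpleGraph.Walk.cons h w, ha, hb => by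
      simp only [liftW, SimpleGraph.Walk.length_cons]
      exact congrArg (· + 1) (liftW_length Gr B s hsub w _ hb)

lemma acyclic_of_induce {Gr B : SimpleGraph W} {s : Set W}
    (hsub : ∀ u v, B.Adj u v → Gr.Adj u v ∧ u ∈ s ∧ v ∈ s)
    (hind : (Gr.induce s).IsAcyclic) : B.IsAcyclic := by
  intro v c hc
  have hv : v ∈ s := by
    cases c with
    | nil => exact absurd rfl hc.ne_nil
    | cons h w => exact (hsub _ _ h).2.1
  set c' := liftW Gr B s hsub c hv hv with hc'
  apply hind c'
  refine ⟨⟨⟨?_⟩, ?_⟩, ?_⟩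
  · -- edges nodup
    have := liftW_edges Gr B s hsub c hv hv
    have h2 : c.edges.Nodup := hc.edges_nodup
    rw [← this] at h2
    exact h2.of_map _
  · -- ne nil
    intro hnil
    have := liftW_length Gr B s hsub c hv hv
    rw [← hc'] at this
    rw [hnil] at this
    simp only [SimpleGraph.Walk.length_nil] at this
    have : c = SimpleGraph.Walk.nil := SimpleGraph.Walk.nil_iff_eq_nil.mp (SimpleGraph.Walk.length_eq_zero_iff.mp this.symm)
    rw [this] at hc
    exact hc.ne_nil rfl
  · -- support tail nodup
    have hs := liftW_support Gr B s hsub c hv hv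
    have h2 : c.support.tail.Nodup := hc.2
    have : c'.support.tail.map Subtype.val = c.support.tail := by
      rw [← hs, List.map_tail]
    rw [← this] at h2
    exact h2.of_map _

end Aux


section Dist

variable {W : Type*} [DecidableEq W] {B : SimpleGraph W} {X Y : Set W}

lemma walk_parity (hd : Disjoint X Y)
    (hbip : ∀ u v, B.Adj u v → (u ∈ X ∧ v ∈ Y) ∨ (u ∈ Y ∧ v ∈ X)) :
    ∀ {a b : W} (w : B.Walk a b), ((a ∈ X) ↔ (b ∈ X)) ↔ Even w.length := by
  intro a b w
  induction w with
  | nil => simp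
  | @cons a c b h w ih =>
    have hne : (a ∈ X) ↔ ¬ (c ∈ X) := by
      rcases hbip _ _ h with ⟨ha, hc⟩ | ⟨ha, hc⟩
      · exact ⟨fun _ hc2 => (Set.disjoint_left.mp hd hc2) hc, fun _ => ha⟩
      · exact ⟨fun ha2 => absurd ha2 (Set.disjoint_right.mp hd ha), fun hn => absurd hc (by tauto)⟩
    simp only [SimpleGraph.Walk.length_cons, Nat.even_add_one, ← ih]
    by_cases hb : b ∈ X <;> by_cases hcX : c ∈ X <;> simp [hb, hcX] at hne ⊢ <;> tauto

lemma adj_dist_cases (hd : Disjoint X Y)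
    (hbip : ∀ u v, B.Adj u v → (u ∈ X ∧ v ∈ Y) ∨ (u ∈ Y ∧ v ∈ X))
    {r u z : W} (hru : B.Reachable r u) (h : B.Adj u z) :
    B.dist r z = B.dist r u + 1 ∨ B.dist r u = B.dist r z + 1 := by
  have hrz : B.Reachable r z := hru.trans h.reachable
  obtain ⟨pu, hpu⟩ := hru.exists_walk_length_eq_dist
  obtain ⟨pz, hpz⟩ := hrz.exists_walk_length_eq_dist
  have h1 : B.dist r z ≤ B.dist r u + 1 := by
    have := SimpleGraph.dist_le (pu.concat h)
    rwa [SimpleGraph.Walk.length_concat, hpu] at this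
  have h2 : B.dist r u ≤ B.dist r z + 1 := by
    have := SimpleGraph.dist_le (pz.concat h.symm)
    rwa [SimpleGraph.Walk.length_concat, hpz] at this
  have hne : B.dist r z ≠ B.dist r u := by
    intro heq
    have e1 := walk_parity hd hbip pz
    have e2 := walk_parity hd hbip (pu.concat h)
    rw [SimpleGraph.Walk.length_concat, hpu] at e2
    rw [hpz, heq] at e1
    rcases Nat.even_or_odd (B.dist r u) with he | ho
    · have : Even (B.dist r u + 1) := e2.mp (e1.mpr he)
      rw [Nat.even_add_one] at this
      exact this he
    · have h3 : ¬ Even (B.dist r u) := Nat.not_even_iff_odd.mpr ho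
      have h4 : ¬ (r ∈ X ↔ z ∈ X) := fun hh => h3 (e1.mp hh)
      have h5 : ¬ Even (B.dist r u + 1) := fun hh => h4 (e2.mpr hh)
      rw [Nat.even_add_one] at h5
      exact h5 h3
  omega

end Dist

section Dist2

variable {W : Type*} [DecidableEq W] {B : SimpleGraph W} {X Y : Set W}

lemma dist_le_of_mem_support {r u t : W} (w : B.Walk r u) (ht : t ∈ w.support) :
    B.dist r t ≤ w.length :=
  le_trans (SimpleGraph.dist_le (w.takeUntil t ht)) (SimpleGraph.Walk.length_takeUntil_le w ht)

lemma unique_parent (hacyc : B.IsAcyclic) {r u z1 z2 : W}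
    (hr1 : B.Reachable r z1) (hr2 : B.Reachable r z2)
    (h1 : B.Adj z1 u) (h2 : B.Adj z2 u)
    (e1 : B.dist r z1 + 1 = B.dist r u) (e2 : B.dist r z2 + 1 = B.dist r u) :
    z1 = z2 := by
  obtain ⟨w1, hw1⟩ := hr1.exists_walk_length_eq_dist
  obtain ⟨w2, hw2⟩ := hr2.exists_walk_length_eq_dist
  have hu1 : u ∉ w1.bypass.support := by
    intro hmem
    have := dist_le_of_mem_support w1 (SimpleGraph.Walk.support_bypass_subset _ hmem)
    rw [hw1] at this; omega
  have hu2 : u ∉ w2.bypass.support := by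
    intro hmem
    have := dist_le_of_mem_support w2 (SimpleGraph.Walk.support_bypass_subset _ hmem)
    rw [hw2] at this; omega
  have hp1 : (SimpleGraph.Walk.cons h1.symm w1.bypass.reverse).IsPath := by
    apply (w1.bypass_isPath.reverse).cons
    rwa [SimpleGraph.Walk.support_reverse, List.mem_reverse]
  have hp2 : (SimpleGraph.Walk.cons h2.symm w2.bypass.reverse).IsPath := by
    apply (w2.bypass_isPath.reverse).cons
    rwa [SimpleGraph.Walk.support_reverse, List.mem_reverse]
  have := hacyc.path_unique ⟨_, hp1⟩ ⟨_, hp2⟩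
  have hsup := congrArg (fun q => (q : B.Walk u r).support) (congrArg Subtype.val this)
  simp only [SimpleGraph.Walk.support_cons] at hsup
  have t1 := SimpleGraph.Walk.support_eq_cons w1.bypass.reverse
  have t2 := SimpleGraph.Walk.support_eq_cons w2.bypass.reverse
  rw [t1, t2] at hsup
  exact (List.cons_eq_cons.mp (List.cons_eq_cons.mp hsup).2).1

lemma exists_parent (hd : Disjoint X Y)
    (hbip : ∀ u v, B.Adj u v → (u ∈ X ∧ v ∈ Y) ∨ (u ∈ Y ∧ v ∈ X))
    {r u : W} (hru : B.Reachable r u) (hne : B.dist r u ≠ 0) :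
    ∃ z, B.Adj z u ∧ B.dist r z + 1 = B.dist r u := by
  obtain ⟨w, hw⟩ := hru.exists_walk_length_eq_dist
  have hlen : w.length ≠ 0 := by rw [hw]; exact hne
  rcases w with _ | _
  · simp at hlen
  · rename_i c h w'
    obtain ⟨x, q, h', hc⟩ := SimpleGraph.Walk.exists_cons_eq_concat h w'
    refine ⟨x, h', ?_⟩
    have hq : B.dist r x ≤ q.length := SimpleGraph.dist_le q
    have hlq : q.length + 1 = B.dist r u := by
      have := congrArg SimpleGraph.Walk.length hc
      rw [SimpleGraph.Walk.length_concat] at this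
      rw [← hw]; exact this.symm
    rcases adj_dist_cases hd hbip (hru.trans h'.reachable.symm) h' with hca | hca
    · omega
    · omega

end Dist2


section Pairs

variable {W : Type*} {B : SimpleGraph W} {X Y : Set W}

/-- The subgraph spanned by a set of pairs. -/
def pairsSub (B : SimpleGraph W) (E : Set (W × W)) (hE : ∀ e ∈ E, B.Adj e.1 e.2) :
    B.Subgraph where
  verts := {v | ∃ e ∈ E, v = e.1 ∨ v = e.2}
  Adj a b := ∃ e ∈ E, (a = e.1 ∧ b = e.2) ∨ (a = e.2 ∧ b = e.1)
  adj_sub := by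
    rintro a b ⟨e, he, ⟨rfl, rfl⟩ | ⟨rfl, rfl⟩⟩
    · exact hE e he
    · exact (hE e he).symm
  edge_vert := by
    rintro a b ⟨e, he, ⟨rfl, rfl⟩ | ⟨rfl, rfl⟩⟩
    · exact ⟨e, he, Or.inl rfl⟩
    · exact ⟨e, he, Or.inr rfl⟩
  symm := by
    constructor
    rintro a b ⟨e, he, ⟨rfl, rfl⟩ | ⟨rfl, rfl⟩⟩
    · exact ⟨e, he, Or.inr ⟨rfl, rfl⟩⟩
    · exact ⟨e, he, Or.inl ⟨rfl, rfl⟩⟩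

lemma pairsSub_inducedMatching (hd : Disjoint X Y) (E : Set (W × W))
    (hE1 : ∀ e ∈ E, e.1 ∈ X ∧ e.2 ∈ Y ∧ B.Adj e.1 e.2)
    (hE2 : ∀ e ∈ E, ∀ f ∈ E, e ≠ f → ¬ B.Adj e.1 f.2)
    (hbip : ∀ u v, B.Adj u v → (u ∈ X ∧ v ∈ Y) ∨ (u ∈ Y ∧ v ∈ X)) :
    IsInducedMatching B (pairsSub B E (fun e he => (hE1 e he).2.2)) := by
  have hXY : ∀ {t : W}, t ∈ X → t ∈ Y → False := fun ht1 ht2 =>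
    Set.disjoint_left.mp hd ht1 ht2
  have heq1 : ∀ e ∈ E, ∀ f ∈ E, e.1 = f.1 → e = f := by
    intro e he f hf h1
    by_contra hne
    exact hE2 e he f hf hne (h1 ▸ (hE1 f hf).2.2)
  have heq2 : ∀ e ∈ E, ∀ f ∈ E, e.2 = f.2 → e = f := by
    intro e he f hf h2
    by_contra hne
    exact hE2 e he f hf hne (h2 ▸ (hE1 e he).2.2)
  constructor
  · rintro v ⟨e, he, rfl | rfl⟩
    · refine ⟨e.2, ⟨e, he, Or.inl ⟨rfl, rfl⟩⟩, ?_⟩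
      rintro y ⟨f, hf, ⟨h1, rfl⟩ | ⟨h1, rfl⟩⟩
      · rw [heq1 e he f hf h1]
      · exact absurd (h1 ▸ (hE1 f hf).2.1) (fun hh => hXY (hE1 e he).1 hh)
    · refine ⟨e.1, ⟨e, he, Or.inr ⟨rfl, rfl⟩⟩, ?_⟩
      rintro y ⟨f, hf, ⟨h1, rfl⟩ | ⟨h1, rfl⟩⟩
      · exact absurd ((hE1 f hf).1) (fun hh => hXY (h1 ▸ hh) (hE1 e he).2.1)
      · rw [heq2 e he f hf h1]
  · rintro a b ⟨e, he, hae⟩ ⟨f, hf, hbf⟩ hadj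
    rcases hbip _ _ hadj with ⟨haX, hbY⟩ | ⟨haY, hbX⟩
    · have hae1 : a = e.1 := by
        rcases hae with rfl | rfl
        · rfl
        · exact absurd (hE1 e he).2.1 (fun hh => hXY haX hh)
      have hbf2 : b = f.2 := by
        rcases hbf with rfl | rfl
        · exact absurd (hE1 f hf).1 (fun hh => hXY hh hbY)
        · rfl
      by_cases hef : e = f
      · exact ⟨e, he, Or.inl ⟨hae1, by rw [hbf2, hef]⟩⟩
      · exact absurd (hae1 ▸ hbf2 ▸ hadj) (hE2 e he f hf hef)
    · have hae2 : a = e.2 := by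
        rcases hae with rfl | rfl
        · exact absurd (hE1 e he).1 (fun hh => hXY hh haY)
        · rfl
      have hbf1 : b = f.1 := by
        rcases hbf with rfl | rfl
        · rfl
        · exact absurd (hE1 f hf).2.1 (fun hh => hXY hbX hh)
      by_cases hef : e = f
      · exact ⟨e, he, Or.inr ⟨hae2, by rw [hbf1, hef]⟩⟩
      · exact absurd (hbf1 ▸ hae2 ▸ hadj.symm) (hE2 f hf e he (fun hh => hef hh.symm))

lemma pairsSub_edgeSet_ncard (hd : Disjoint X Y) (E : Set (W × W))
    (hE1 : ∀ e ∈ E, e.1 ∈ X ∧ e.2 ∈ Y ∧ B.Adj e.1 e.2) :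
    (pairsSub B E (fun e he => (hE1 e he).2.2)).edgeSet = (fun e => s(e.1, e.2)) '' E ∧
    ((fun (e : W × W) => s(e.1, e.2)) '' E).ncard = E.ncard := by
  constructor
  · ext x
    induction x with
    | _ a b =>
      simp only [SimpleGraph.Subgraph.mem_edgeSet, Set.mem_image]
      constructor
      · rintro ⟨e, he, ⟨rfl, rfl⟩ | ⟨rfl, rfl⟩⟩
        · exact ⟨e, he, rfl⟩
        · exact ⟨e, he, Sym2.eq_swap⟩
      · rintro ⟨e, he, hx⟩
        rcases Sym2.eq_iff.mp hx with ⟨h1, h2⟩ | ⟨h1, h2⟩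
        · exact ⟨e, he, Or.inl ⟨h1.symm, h2.symm⟩⟩
        · exact ⟨e, he, Or.inr ⟨h2.symm, h1.symm⟩⟩
  · apply Set.ncard_image_of_injOn
    intro e he f hf hx
    rcases Sym2.eq_iff.mp hx with ⟨h1, h2⟩ | ⟨h1, h2⟩
    · exact Prod.ext h1 h2
    · exact absurd ((h1 ▸ (hE1 e he).1)) (fun hh => Set.disjoint_left.mp hd hh (hE1 f hf).2.1)

end Pairs


section Combine

variable {W : Type*} [Fintype W] {B : SimpleGraph W} {X Y : Set W}

lemma combine {A D : Set W} (NP E' : Set (W × W))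
    (hNP1 : ∀ e ∈ NP, e.1 ∈ X ∧ e.1 ∈ A ∧ e.2 ∈ Y ∧ e.2 ∈ A ∧ B.Adj e.1 e.2)
    (hNP2 : ∀ e ∈ NP, ∀ f ∈ NP, e ≠ f → ¬ B.Adj e.1 f.2)
    (hND : ∀ e ∈ NP, ∀ z,
      (z = e.1 ∨ z = e.2 ∨ (B.Adj e.1 z ∧ z ∈ A) ∨ (B.Adj e.2 z ∧ z ∈ A)) → z ∈ D)
    (hE'1 : ∀ e ∈ E', e.1 ∈ X ∧ e.1 ∈ A \ D ∧ e.2 ∈ Y ∧ e.2 ∈ A \ D ∧ B.Adj e.1 e.2)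
    (hE'2 : ∀ e ∈ E', ∀ f ∈ E', e ≠ f → ¬ B.Adj e.1 f.2) :
    (∀ e ∈ E' ∪ NP, e.1 ∈ X ∧ e.1 ∈ A ∧ e.2 ∈ Y ∧ e.2 ∈ A ∧ B.Adj e.1 e.2) ∧
    (∀ e ∈ E' ∪ NP, ∀ f ∈ E' ∪ NP, e ≠ f → ¬ B.Adj e.1 f.2) ∧
    (E' ∪ NP).ncard = E'.ncard + NP.ncard := by
  have hdisj : Disjoint E' NP := by
    rw [Set.disjoint_left]
    intro e he hnp
    have h1 : e.1 ∈ D := hND e hnp e.1 (Or.inl rfl)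
    exact (hE'1 e he).2.1.2 h1
  refine ⟨?_, ?_, ?_⟩
  · rintro e (he | he)
    · obtain ⟨q1, q2, q3, q4, q5⟩ := hE'1 e he
      exact ⟨q1, q2.1, q3, q4.1, q5⟩
    · exact hNP1 e he
  · rintro e (he | he) f (hf | hf) hne hadj
    · exact hE'2 e he f hf hne hadj
    · -- e ∈ E', f ∈ NP
      have : e.1 ∈ D := hND f hf e.1 (Or.inr (Or.inr (Or.inr ⟨hadj.symm, (hE'1 e he).2.1.1⟩)))
      exact (hE'1 e he).2.1.2 this
    · -- e ∈ NP, f ∈ E'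
      have : f.2 ∈ D := hND e he f.2 (Or.inr (Or.inr (Or.inl ⟨hadj, (hE'1 f hf).2.2.2.1.1⟩)))
      exact (hE'1 f hf).2.2.2.1.2 this
    · exact hNP2 e he f hf hne hadj
  · exact Set.ncard_union_eq hdisj

end Combine

section Key

variable {W : Type*} [Fintype W] [DecidableEq W]

lemma key (B : SimpleGraph W) (X Y : Set W) (hd : Disjoint X Y)
    (hbip : ∀ u v, B.Adj u v → (u ∈ X ∧ v ∈ Y) ∨ (u ∈ Y ∧ v ∈ X))
    (hacyc : B.IsAcyclic) :
    ∀ (n : ℕ) (A : Set W), A.ncard ≤ n →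
    ∃ E : Set (W × W),
      (∀ e ∈ E, e.1 ∈ X ∧ e.1 ∈ A ∧ e.2 ∈ Y ∧ e.2 ∈ A ∧ B.Adj e.1 e.2) ∧
      (∀ e ∈ E, ∀ f ∈ E, e ≠ f → ¬ B.Adj e.1 f.2) ∧
      {x | x ∈ X ∧ x ∈ A ∧ 2 ≤ (B.neighborSet x ∩ A).ncard}.ncard ≤ 2 * E.ncard := by
  intro n
  induction n with
  | zero =>
    intro A hA
    have hAe : A = ∅ := by
      rw [← Set.ncard_eq_zero (A.toFinite)]; omega
    refine ⟨∅, by simp, by simp, ?_⟩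
    have : {x | x ∈ X ∧ x ∈ A ∧ 2 ≤ (B.neighborSet x ∩ A).ncard} = ∅ := by
      rw [hAe]; ext x; simp
    rw [this]; simp
  | succ n IH =>
    intro A hA
    set S := {x | x ∈ X ∧ x ∈ A ∧ 2 ≤ (B.neighborSet x ∩ A).ncard} with hSdef
    classical
    rcases S.eq_empty_or_nonempty with hSe | ⟨r, hr⟩
    · refine ⟨∅, by simp, by simp, ?_⟩
      rw [hSe]; simp
    set B' := resG B A with hB'def
    have hB'le : B' ≤ B := by intro u v h; exact h.1
    have hB'adj : ∀ {u v : W}, B'.Adj u v ↔ (B.Adj u v ∧ u ∈ A ∧ v ∈ A) := Iff.rfl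
    have hacyc' : B'.IsAcyclic := acyclic_mono hB'le hacyc
    have hbip' : ∀ u v, B'.Adj u v → (u ∈ X ∧ v ∈ Y) ∨ (u ∈ Y ∧ v ∈ X) :=
      fun u v h => hbip u v h.1
    have hXY : ∀ {t : W}, t ∈ X → t ∈ Y → False := fun ht1 ht2 =>
      Set.disjoint_left.mp hd ht1 ht2
    have hXX : ∀ {a b : W}, B.Adj a b → a ∈ X → b ∈ X → False := by
      intro a b hab ha hb
      rcases hbip a b hab with ⟨_, h2⟩ | ⟨h1, _⟩
      · exact hXY hb h2
      · exact hXY ha h1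
    have hYY : ∀ {a b : W}, B.Adj a b → a ∈ Y → b ∈ Y → False := by
      intro a b hab ha hb
      rcases hbip a b hab with ⟨h1, _⟩ | ⟨_, h2⟩
      · exact hXY h1 ha
      · exact hXY h2 hb
    have hnbr : ∀ x ∈ A, B.neighborSet x ∩ A = B'.neighborSet x := by
      intro x hx
      ext z
      simp only [Set.mem_inter_iff, SimpleGraph.mem_neighborSet, hB'adj]
      tauto
    have havenbrs : ∀ x ∈ S, ∀ q : W, ∃ c, B'.Adj x c ∧ c ≠ q := by
      intro x hx q
      by_contra hcon
      push_neg at hcon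
      have hsub : B'.neighborSet x ⊆ {q} := fun c hc => hcon c hc
      have h2 : (B'.neighborSet x).ncard ≤ 1 := by
        have := Set.ncard_le_ncard hsub (Set.toFinite _)
        simpa using this
      have h3 : 2 ≤ (B'.neighborSet x).ncard := by
        rw [← hnbr x hx.2.1]; exact hx.2.2
      omega
    set T := {x | x ∈ S ∧ B'.Reachable r x} with hTdef
    obtain ⟨v, hvT, hvmax⟩ := Set.exists_max_image T (fun x => B'.dist r x)
      (T.toFinite) ⟨r, hr, Reachable.refl r⟩
    set d := B'.dist r v with hddef
    have hmax : ∀ x ∈ S, B'.Reachable r x → B'.dist r x ≤ d := fun x hx hr2 => hvmax x ⟨hx, hr2⟩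
    by_cases hd0 : d = 0
    · -- base case: the only S-vertex reachable from r is r itself
      have hbase : ∀ x ∈ S, B'.Reachable r x → x = r := by
        intro x hx hrx
        have h1 : B'.dist r x = 0 := by have := hmax x hx hrx; omega
        obtain ⟨w, hw⟩ := hrx.exists_walk_length_eq_dist
        rw [h1] at hw
        cases w with
        | nil => rfl
        | cons h w => simp at hw
      obtain ⟨c, hc, -⟩ := havenbrs r hr r
      have hrX : r ∈ X := hr.1
      have hrA : r ∈ A := hr.2.1
      have hcY : c ∈ Y := by
        rcases hbip' r c hc with ⟨_, h2⟩ | ⟨h1, _⟩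
        · exact h2
        · exact absurd h1 (fun hh => hXY hrX hh)
      have hcA : c ∈ A := hc.2.2
      set D := {z | z = r ∨ z = c ∨ B'.Adj r z ∨ B'.Adj c z} with hDdef
      set A' := A \ D with hA'def
      have hA'n : A'.ncard ≤ n := by
        have hss : A' ⊂ A := by
          constructor
          · exact Set.diff_subset
          · intro hsub
            exact (hsub hrA).2 (Or.inl rfl)
        have := Set.ncard_lt_ncard hss (A.toFinite)
        omega
      obtain ⟨E', hE'1, hE'2, hE'3⟩ := IH A' hA'n
      set NP : Set (W × W) := {(r, c)} with hNPdef
      have hNP1 : ∀ e ∈ NP, e.1 ∈ X ∧ e.1 ∈ A ∧ e.2 ∈ Y ∧ e.2 ∈ A ∧ B.Adj e.1 e.2 := by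
        rintro e he
        rw [hNPdef, Set.mem_singleton_iff] at he
        subst he
        exact ⟨hrX, hrA, hcY, hcA, hc.1⟩
      have hNP2 : ∀ e ∈ NP, ∀ f ∈ NP, e ≠ f → ¬ B.Adj e.1 f.2 := by
        rintro e he f hf hne
        rw [hNPdef, Set.mem_singleton_iff] at he hf
        exact absurd (he.trans hf.symm) hne
      have hND : ∀ e ∈ NP, ∀ z,
          (z = e.1 ∨ z = e.2 ∨ (B.Adj e.1 z ∧ z ∈ A) ∨ (B.Adj e.2 z ∧ z ∈ A)) → z ∈ D := by
        rintro e he z hz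
        rw [hNPdef, Set.mem_singleton_iff] at he
        subst he
        rcases hz with rfl | rfl | ⟨h1, h2⟩ | ⟨h1, h2⟩
        · exact Or.inl rfl
        · exact Or.inr (Or.inl rfl)
        · exact Or.inr (Or.inr (Or.inl ⟨h1, hrA, h2⟩))
        · exact Or.inr (Or.inr (Or.inr ⟨h1, hcA, h2⟩))
      obtain ⟨hC1, hC2, hC3⟩ := combine (B := B) (X := X) (Y := Y) (A := A) (D := D)
        NP E' hNP1 hNP2 hND hE'1 hE'2
      refine ⟨E' ∪ NP, hC1, hC2, ?_⟩
      -- counting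
      set S' := {x | x ∈ X ∧ x ∈ A' ∧ 2 ≤ (B.neighborSet x ∩ A').ncard} with hS'def
      have hsub : S ⊆ S' ∪ {r} := by
        intro x hx
        by_cases hxr : x = r
        · exact Or.inr (by simp [hxr])
        left
        have hxX : x ∈ X := hx.1
        have hxA : x ∈ A := hx.2.1
        have hxD : x ∉ D := by
          rw [hDdef]
          rintro (rfl | rfl | hadj | hadj)
          · exact hxr rfl
          · exact hXY hxX hcY
          · exact hXX hadj.1 hrX hxX
          · exact hxr (hbase x hx (hc.reachable.trans hadj.reachable))
        have hnn : B.neighborSet x ∩ A ⊆ A' := by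
          rintro z ⟨hzx, hzA⟩
          refine ⟨hzA, ?_⟩
          rw [hDdef]
          rintro (rfl | heq | hadj | hadj)
          · exact hXX hzx hxX hrX
          · exact hxr (hbase x hx (hc.reachable.trans
              (Adj.reachable (show B'.Adj c x from ⟨(heq ▸ hzx : B.Adj x c).symm, hcA, hxA⟩))))
          · -- B'.Adj r z and B.Adj x z : x reachable from r through z
            have hxz : B'.Adj x z := ⟨hzx, hxA, hadj.2.2⟩
            exact hxr (hbase x hx (hadj.reachable.trans hxz.reachable.symm))
          · -- B'.Adj c z with z a neighbor of x ∈ X, so z ∈ Y; c ∈ Y too: impossible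
            have hzY : z ∈ Y := by
              rcases hbip x z hzx with ⟨_, h2⟩ | ⟨h1, _⟩
              · exact h2
              · exact absurd h1 (fun hh => hXY hxX hh)
            exact hYY hadj.1 hcY hzY
        have hnbreq : B.neighborSet x ∩ A' = B.neighborSet x ∩ A := by
          apply Set.Subset.antisymm
          · exact Set.inter_subset_inter_right _ Set.diff_subset
          · exact fun z hz => ⟨hz.1, hnn hz⟩
        exact ⟨hxX, ⟨hxA, hxD⟩, by rw [hnbreq]; exact hx.2.2⟩
      have hNPcard : NP.ncard = 1 := by rw [hNPdef]; simp
      have hcount : S.ncard ≤ S'.ncard + 1 := by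
        calc S.ncard ≤ (S' ∪ {r}).ncard := Set.ncard_le_ncard hsub (Set.toFinite _)
        _ ≤ S'.ncard + ({r} : Set W).ncard := Set.ncard_union_le _ _
        _ = S'.ncard + 1 := by simp
      rw [hC3, hNPcard]
      have := hE'3
      omega
    · -- main case: d ≥ 1
      have hvS : v ∈ S := hvT.1
      have hrv : B'.Reachable r v := hvT.2
      have hvX : v ∈ X := hvS.1
      have hvA : v ∈ A := hvS.2.1
      obtain ⟨p, hpv, hpd⟩ := exists_parent hd hbip' hrv hd0
      have hrp : B'.Reachable r p := hrv.trans hpv.reachable.symm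
      have hpY : p ∈ Y := by
        rcases hbip' p v hpv with ⟨h1, h2⟩ | ⟨h1, _⟩
        · exact absurd h2 (fun hh => hXY hvX hh)
        · exact h1
      have hpA : p ∈ A := hpv.2.1
      set U := {u | u ∈ S ∧ B'.Adj p u ∧ B'.dist r u = d} with hUdef
      have hvU : v ∈ U := ⟨hvS, hpv, rfl⟩
      set cfun : W → W := fun u =>
        if h : ∃ c, B'.Adj u c ∧ c ≠ p then h.choose else u with hcfundef
      have hcfun : ∀ u ∈ U, B'.Adj u (cfun u) ∧ cfun u ≠ p := by
        intro u hu
        have hex := havenbrs u hu.1 p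
        rw [hcfundef]
        simp only [dif_pos hex]
        exact hex.choose_spec
      have hUX : ∀ u ∈ U, u ∈ X := fun u hu => hu.1.1
      have hUA : ∀ u ∈ U, u ∈ A := fun u hu => hu.1.2.1
      have hUreach : ∀ u ∈ U, B'.Reachable r u := fun u hu => hrp.trans hu.2.1.reachable
      have hparent : ∀ u ∈ U, ∀ z, B'.Adj z u → B'.dist r z + 1 = d → z = p := by
        intro u hu z hz hzd
        refine unique_parent hacyc' ((hUreach u hu).trans hz.reachable.symm) hrp hz hu.2.1 ?_ ?_
        · rw [hu.2.2]; exact hzd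
        · rw [hu.2.2]; exact hpd
      have hcd : ∀ u ∈ U, B'.dist r (cfun u) = d + 1 := by
        intro u hu
        rcases adj_dist_cases hd hbip' (hUreach u hu) (hcfun u hu).1 with h1 | h2
        · rw [h1, hu.2.2]
        · exfalso
          apply (hcfun u hu).2
          refine hparent u hu (cfun u) (hcfun u hu).1.symm ?_
          rw [hu.2.2] at h2; omega
      have hcY : ∀ u ∈ U, cfun u ∈ Y := by
        intro u hu
        rcases hbip' u (cfun u) (hcfun u hu).1 with ⟨_, h2⟩ | ⟨h1, _⟩
        · exact h2
        · exact absurd h1 (fun hh => hXY (hUX u hu) hh)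
      have hcA : ∀ u ∈ U, cfun u ∈ A := fun u hu => (hcfun u hu).1.2.2
      have hcreach : ∀ u ∈ U, B'.Reachable r (cfun u) :=
        fun u hu => (hUreach u hu).trans (hcfun u hu).1.reachable
      have hF1 : ∀ u ∈ U, ∀ z, B'.Adj z (cfun u) → z ≠ u → B'.dist r z = d + 2 := by
        intro u hu z hz hne
        rcases adj_dist_cases hd hbip' (hcreach u hu) hz.symm with h1 | h2
        · rw [h1, hcd u hu]
        · exfalso
          apply hne
          refine unique_parent hacyc' ((hcreach u hu).trans hz.reachable.symm)
            (hUreach u hu) hz (hcfun u hu).1 ?_ ?_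
          · rw [hcd u hu] at h2 ⊢; omega
          · rw [hcd u hu, hu.2.2]
      have hznS : ∀ u ∈ U, ∀ z, B'.Adj z (cfun u) → z ≠ u → z ∉ S := by
        intro u hu z hz hne hzS
        have h1 := hmax z hzS ((hcreach u hu).trans hz.reachable.symm)
        rw [hF1 u hu z hz hne] at h1
        omega
      set gset := {z | B'.Adj z p ∧ B'.dist r z + 1 = B'.dist r p} with hgdef
      have hgss : gset.Subsingleton := by
        intro z1 h1 z2 h2
        exact unique_parent hacyc' (hrp.trans h1.1.reachable.symm)
          (hrp.trans h2.1.reachable.symm) h1.1 h2.1 h1.2 h2.2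
      have hgcard : gset.ncard ≤ 1 := by
        rcases hgss.eq_empty_or_singleton with he | ⟨a, ha⟩
        · rw [he]; simp
        · rw [ha]; simp
      set D := {z | ∃ u ∈ U, z = u ∨ z = cfun u ∨ B'.Adj u z ∨ B'.Adj (cfun u) z} with hDdef
      set A' := A \ D with hA'def
      have hA'n : A'.ncard ≤ n := by
        have hss : A' ⊂ A := by
          constructor
          · exact Set.diff_subset
          · intro hsub
            exact (hsub hvA).2 ⟨v, hvU, Or.inl rfl⟩
        have := Set.ncard_lt_ncard hss (A.toFinite)
        omega
      obtain ⟨E', hE'1, hE'2, hE'3⟩ := IH A' hA'n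
      set NP : Set (W × W) := (fun u => (u, cfun u)) '' U with hNPdef
      have hNPcard : NP.ncard = U.ncard :=
        Set.ncard_image_of_injOn (fun a _ b _ h => (Prod.ext_iff.mp h).1)
      have hNP1 : ∀ e ∈ NP, e.1 ∈ X ∧ e.1 ∈ A ∧ e.2 ∈ Y ∧ e.2 ∈ A ∧ B.Adj e.1 e.2 := by
        intro e he
        rw [hNPdef] at he
        obtain ⟨u, hu, rfl⟩ := he
        exact ⟨hUX u hu, hUA u hu, hcY u hu, hcA u hu, (hcfun u hu).1.1⟩
      have hNP2 : ∀ e ∈ NP, ∀ f ∈ NP, e ≠ f → ¬ B.Adj e.1 f.2 := by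
        intro e he f hf hne hadj
        rw [hNPdef] at he hf
        obtain ⟨u, hu, rfl⟩ := he
        obtain ⟨u', hu', rfl⟩ := hf
        have hune : u ≠ u' := fun hh => hne (by rw [hh])
        have hadj' : B'.Adj u (cfun u') := ⟨hadj, hUA u hu, hcA u' hu'⟩
        have := hF1 u' hu' u hadj' hune
        rw [hu.2.2] at this
        omega
      have hND : ∀ e ∈ NP, ∀ z,
          (z = e.1 ∨ z = e.2 ∨ (B.Adj e.1 z ∧ z ∈ A) ∨ (B.Adj e.2 z ∧ z ∈ A)) → z ∈ D := by
        intro e he z hz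
        rw [hNPdef] at he
        obtain ⟨u, hu, rfl⟩ := he
        rcases hz with heq1 | heq2 | ⟨h1, h2⟩ | ⟨h1, h2⟩
        · exact ⟨u, hu, Or.inl heq1⟩
        · exact ⟨u, hu, Or.inr (Or.inl heq2)⟩
        · exact ⟨u, hu, Or.inr (Or.inr (Or.inl ⟨h1, hUA u hu, h2⟩))⟩
        · exact ⟨u, hu, Or.inr (Or.inr (Or.inr ⟨h1, hcA u hu, h2⟩))⟩
      obtain ⟨hC1, hC2, hC3⟩ := combine (B := B) (X := X) (Y := Y) (A := A) (D := D)
        NP E' hNP1 hNP2 hND hE'1 hE'2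
      refine ⟨E' ∪ NP, hC1, hC2, ?_⟩
      set S' := {x | x ∈ X ∧ x ∈ A' ∧ 2 ≤ (B.neighborSet x ∩ A').ncard} with hS'def
      have hsub : S ⊆ S' ∪ (U ∪ gset) := by
        intro x hx
        by_cases hxU : x ∈ U
        · exact Or.inr (Or.inl hxU)
        by_cases hxg : x ∈ gset
        · exact Or.inr (Or.inr hxg)
        left
        have hxX : x ∈ X := hx.1
        have hxA : x ∈ A := hx.2.1
        have hxD : x ∉ D := by
          rw [hDdef]
          rintro ⟨u, hu, rfl | rfl | hadj | hadj⟩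
          · exact hxU hu
          · exact hXY hxX (hcY u hu)
          · exact hXX hadj.1 (hUX u hu) hxX
          · exact hznS u hu x hadj.symm (fun hh => hxU (hh ▸ hu)) hx
        have hnn : B.neighborSet x ∩ A ⊆ A' := by
          rintro z ⟨hzx, hzA⟩
          refine ⟨hzA, ?_⟩
          rw [hDdef]
          rintro ⟨u, hu, heq | heq | hadj | hadj⟩
          · exact hXX (heq ▸ hzx) hxX (hUX u hu)
          · exact hznS u hu x ⟨heq ▸ hzx, hxA, hcA u hu⟩ (fun hh => hxU (by rw [hh]; exact hu)) hx
          · -- z is a neighbor of u ∈ U and of x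
            have hxz : B'.Adj x z := ⟨hzx, hxA, hadj.2.2⟩
            have hrz : B'.Reachable r z := (hUreach u hu).trans hadj.reachable
            have hrx : B'.Reachable r x := hrz.trans hxz.reachable.symm
            have hxd : B'.dist r x ≤ d := hmax x hx hrx
            rcases adj_dist_cases hd hbip' (hUreach u hu) hadj with hz1 | hz2
            · -- dist z = d + 1
              rcases adj_dist_cases hd hbip' hrz hxz.symm with hx1 | hx2
              · rw [hz1, hu.2.2] at hx1; omega
              · -- dist x + 1 = dist z, so x is a parent of z at distance d: x = u
                apply hxU
                have hxeq : x = u := by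
                  refine unique_parent hacyc' hrx (hUreach u hu) hxz hadj ?_ ?_
                  · omega
                  · rw [hz1, hu.2.2]
                rw [hxeq]; exact hu
            · -- dist z + 1 = dist u = d, so z = p
              have hzp : z = p := by
                apply hparent u hu z hadj.symm
                rw [hu.2.2] at hz2; omega
              rw [hzp] at hzx
              have hxp : B'.Adj x p := ⟨hzx, hxA, hpA⟩
              rcases adj_dist_cases hd hbip' hrp hxp.symm with h1 | h2
              · -- dist x = dist p + 1 = d : then x ∈ U
                apply hxU
                refine ⟨hx, hxp.symm, ?_⟩
                rw [h1]; omega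
              · -- dist p = dist x + 1 : then x ∈ gset
                exact absurd ⟨hxp, h2.symm⟩ hxg
          · -- z neighbor of cfun u and of x : both in Y, impossible
            have hzY : z ∈ Y := by
              rcases hbip x z hzx with ⟨_, h2⟩ | ⟨h1, _⟩
              · exact h2
              · exact absurd h1 (fun hh => hXY hxX hh)
            exact hYY hadj.1 (hcY u hu) hzY
        have hnbreq : B.neighborSet x ∩ A' = B.neighborSet x ∩ A := by
          apply Set.Subset.antisymm
          · exact Set.inter_subset_inter_right _ Set.diff_subset
          · exact fun z hz => ⟨hz.1, hnn hz⟩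
        exact ⟨hxX, ⟨hxA, hxD⟩, by rw [hnbreq]; exact hx.2.2⟩
      have hU1 : 1 ≤ U.ncard := (Set.ncard_pos (U.toFinite)).mpr ⟨v, hvU⟩
      have hcount : S.ncard ≤ S'.ncard + U.ncard + gset.ncard := by
        calc S.ncard ≤ (S' ∪ (U ∪ gset)).ncard := Set.ncard_le_ncard hsub (Set.toFinite _)
        _ ≤ S'.ncard + (U ∪ gset).ncard := Set.ncard_union_le _ _
        _ ≤ S'.ncard + (U.ncard + gset.ncard) := by
            have := Set.ncard_union_le U gset
            omega
        _ = S'.ncard + U.ncard + gset.ncard := by omega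
      rw [hC3, hNPcard]
      omega

end Key


theorem stmt13 (G : SimpleGraph V) (X Y : Set V) (hdisj : Disjoint X Y)
    (hforest : (G.induce (X ∪ Y)).IsAcyclic) (w : ℕ)
    (hw : ∀ M : (bipGraph G X Y).Subgraph,
      IsInducedMatching (bipGraph G X Y) M → M.edgeSet.ncard ≤ w) :
    {v | v ∈ X ∧ 2 ≤ (G.neighborSet v ∩ Y).ncard}.ncard ≤ 2 * w := by
  classical
  set B := bipGraph G X Y with hB
  have hbip : ∀ u v, B.Adj u v → (u ∈ X ∧ v ∈ Y) ∨ (u ∈ Y ∧ v ∈ X) := fun u v h => h.2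
  have hacyc : B.IsAcyclic := by
    apply acyclic_of_induce (Gr := G) (s := X ∪ Y) (B := B) ?_ hforest
    intro u v h
    refine ⟨h.1, ?_, ?_⟩
    · exact h.2.elim (fun q => Or.inl q.1) (fun q => Or.inr q.1)
    · exact h.2.elim (fun q => Or.inr q.2) (fun q => Or.inl q.2)
  obtain ⟨E, hE1, hE2, hE3⟩ := key B X Y hdisj hbip hacyc (Set.univ.ncard) Set.univ le_rfl
  have hE1' : ∀ e ∈ E, e.1 ∈ X ∧ e.2 ∈ Y ∧ B.Adj e.1 e.2 :=
    fun e he => ⟨(hE1 e he).1, (hE1 e he).2.2.1, (hE1 e he).2.2.2.2⟩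
  have hind := pairsSub_inducedMatching hdisj E hE1' hE2 hbip
  have hedge := pairsSub_edgeSet_ncard hdisj E hE1'
  have hMw : E.ncard ≤ w := by
    have := hw _ hind
    rw [hedge.1, hedge.2] at this
    exact this
  have hSeq : {v | v ∈ X ∧ 2 ≤ (G.neighborSet v ∩ Y).ncard} =
      {x | x ∈ X ∧ x ∈ (Set.univ : Set V) ∧ 2 ≤ (B.neighborSet x ∩ Set.univ).ncard} := by
    ext x
    simp only [Set.mem_setOf_eq, Set.mem_univ, true_and, Set.inter_univ]
    constructor
    · rintro ⟨hx, h2⟩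
      refine ⟨hx, ?_⟩
      have : G.neighborSet x ∩ Y = B.neighborSet x := by
        ext z
        simp only [Set.mem_inter_iff, SimpleGraph.mem_neighborSet]
        constructor
        · rintro ⟨h1, hz⟩
          exact ⟨h1, Or.inl ⟨hx, hz⟩⟩
        · rintro ⟨h1, ⟨_, hz⟩ | ⟨hxY, _⟩⟩
          · exact ⟨h1, hz⟩
          · exact absurd hxY (fun hh => Set.disjoint_left.mp hdisj hx hh)
      rwa [← this]
    · rintro ⟨hx, h2⟩
      refine ⟨hx, ?_⟩
      have : G.neighborSet x ∩ Y = B.neighborSet x := by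
        ext z
        simp only [Set.mem_inter_iff, SimpleGraph.mem_neighborSet]
        constructor
        · rintro ⟨h1, hz⟩
          exact ⟨h1, Or.inl ⟨hx, hz⟩⟩
        · rintro ⟨h1, ⟨_, hz⟩ | ⟨hxY, _⟩⟩
          · exact ⟨h1, hz⟩
          · exact absurd hxY (fun hh => Set.disjoint_left.mp hdisj hx hh)
      rwa [this]
  rw [hSeq]
  omega
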